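/- Let X be a type, l a nontrivial filter on X, and ε, ε̃ : X → ℝ. Assume there are constants C ≥ 1 and κ > 0 such that, eventually along l, 0 < ε(x) < 1, 0 < ε̃(x) < 1, ε̃(x) ≤ C·ε(x)^κ and ε(x) ≤ C·ε̃(x)^κ, and that ε tends to 0 along l. Let λ, λ̃ > 1 be real numbers and suppose that log(−log ε̃(x)) / log(−log ε(x)) tends to log λ̃ / log λ along l. Then λ = λ̃. -/
import Mathlib

open Filter Real

/-- Let `l` be a nontrivial filter on `X` and `e, e' : X → ℝ` the two separatrix
splitting parameters. Assume eventually along `l` that `0 < e < 1`, `0 < e' < 1`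
and the two-sided Hölder bounds `e' ≤ C·e^κ`, `e ≤ C·e'^κ` hold (`C ≥ 1`, `κ > 0`),
and that `e → 0` along `l`. If `lam, lam' > 1` and the ratio of double logarithms
`log(−log e')/log(−log e)` tends to `log lam' / log lam` along `l`,
then `lam = lam'`. -/
theorem charNum_eq_of_holder
    {X : Type*} (l : Filter X) [l.NeBot] (e e' : X → ℝ) (C κ : ℝ)
    (hC : 1 ≤ C) (hκ : 0 < κ)
    (hev : ∀ᶠ x in l,
      0 < e x ∧ e x < 1 ∧ 0 < e' x ∧ e' x < 1 ∧
      e' x ≤ C * e x ^ κ ∧ e x ≤ C * e' x ^ κ)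
    (he0 : Filter.Tendsto e l (nhds 0))
    (lam lam' : ℝ) (hlam : 1 < lam) (hlam' : 1 < lam')
    (hlim : Filter.Tendsto
      (fun x => Real.log (-Real.log (e' x)) / Real.log (-Real.log (e x)))
      l (nhds (Real.log lam' / Real.log lam))) :
    lam = lam' := by
  set t : X → ℝ := fun x => -Real.log (e x) with ht_def
  set t' : X → ℝ := fun x => -Real.log (e' x) with ht'_def
  clear_value t t'
  have hCpos : (0:ℝ) < C := lt_of_lt_of_le one_pos hC
  have hlogC : 0 ≤ Real.log C := Real.log_nonneg hC
  -- t → ∞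
  have hepos : ∀ᶠ x in l, 0 < e x := hev.mono fun x hx => hx.1
  have hloge : Tendsto (fun x => Real.log (e x)) l atBot := by
    have h1 : Tendsto e l (nhdsWithin 0 (Set.Ioi 0)) :=
      tendsto_nhdsWithin_of_tendsto_nhds_of_eventually_within _ he0 hepos
    exact Real.tendsto_log_nhdsGT_zero.comp h1
  have ht : Tendsto t l atTop := by
    rw [ht_def]; exact tendsto_neg_atTop_iff.mpr hloge
  -- the two-sided bounds on t'
  have hbounds : ∀ᶠ x in l, κ * t x - Real.log C ≤ t' x ∧
      t' x ≤ (t x + Real.log C) / κ := by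
    filter_upwards [hev] with x ⟨he1, he2, he'1, he'2, hub, hlb⟩
    have h1 : Real.log (e' x) ≤ Real.log C + κ * Real.log (e x) := by
      calc Real.log (e' x) ≤ Real.log (C * e x ^ κ) :=
            Real.log_le_log he'1 hub
        _ = Real.log C + κ * Real.log (e x) := by
            rw [Real.log_mul (ne_of_gt hCpos) (ne_of_gt (Real.rpow_pos_of_pos he1 κ)),
              Real.log_rpow he1]
    have h2 : Real.log (e x) ≤ Real.log C + κ * Real.log (e' x) := by
      calc Real.log (e x) ≤ Real.log (C * e' x ^ κ) :=
            Real.log_le_log he1 hlb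
        _ = Real.log C + κ * Real.log (e' x) := by
            rw [Real.log_mul (ne_of_gt hCpos) (ne_of_gt (Real.rpow_pos_of_pos he'1 κ)),
              Real.log_rpow he'1]
    constructor
    · simp only [ht_def, ht'_def]; nlinarith
    · rw [le_div_iff₀ hκ]
      simp only [ht_def, ht'_def]; nlinarith
  -- eventually t is large
  have hTlarge : ∀ᶠ x in l, max (max (2 * Real.log C / κ) (Real.log C)) 2 ≤ t x :=
    ht.eventually_ge_atTop _
  -- ratio bounds
  have hratio : ∀ᶠ x in l, κ / 2 ≤ t' x / t x ∧ t' x / t x ≤ 2 / κ ∧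
      0 < t x ∧ 1 < t x ∧ 0 < t' x := by
    filter_upwards [hbounds, hTlarge] with x ⟨hb1, hb2⟩ hT
    have h2 : (2:ℝ) ≤ t x := le_trans (le_max_right _ _) hT
    have htpos : 0 < t x := by linarith
    have hT1 : 2 * Real.log C / κ ≤ t x :=
      le_trans (le_trans (le_max_left _ _) (le_max_left _ _)) hT
    have hT2 : Real.log C ≤ t x :=
      le_trans (le_trans (le_max_right _ _) (le_max_left _ _)) hT
    have hT1' : 2 * Real.log C ≤ κ * t x := by
      rw [div_le_iff₀ hκ] at hT1; linarith [hT1]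
    have hlow : κ / 2 * t x ≤ t' x := by
      have heq : κ / 2 * t x = κ * t x - κ * t x / 2 := by ring
      rw [heq]
      have h3 : Real.log C ≤ κ * t x / 2 := by linarith
      linarith
    have hup : t' x ≤ 2 / κ * t x := by
      rw [le_div_iff₀ hκ] at hb2
      have : t x + Real.log C ≤ 2 * t x := by linarith
      rw [div_mul_eq_mul_div, le_div_iff₀ hκ]; nlinarith
    have ht'pos : 0 < t' x := lt_of_lt_of_le (by positivity) hlow
    refine ⟨(le_div_iff₀ htpos).mpr hlow, (div_le_iff₀ htpos).mpr ?_, htpos, by linarith, ht'pos⟩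
    · calc t' x ≤ 2 / κ * t x := hup
        _ = 2 / κ * t x := rfl
  -- the double-log ratio tends to 1
  have hlogt : Tendsto (fun x => Real.log (t x)) l atTop :=
    Real.tendsto_log_atTop.comp ht
  set M : ℝ := max |Real.log (κ / 2)| |Real.log (2 / κ)| with hM
  have hzero : Tendsto (fun x => Real.log (t' x / t x) / Real.log (t x)) l (nhds 0) := by
    have hMdiv : Tendsto (fun x => M / Real.log (t x)) l (nhds 0) :=
      Filter.Tendsto.div_atTop tendsto_const_nhds hlogt
    refine squeeze_zero_norm' ?_ hMdiv
    · filter_upwards [hratio, hlogt.eventually_ge_atTop 1] with x ⟨hr1, hr2, htp, ht1, ht'p⟩ hlg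
      have hrpos : 0 < t' x / t x := div_pos ht'p htp
      have h1 : Real.log (κ / 2) ≤ Real.log (t' x / t x) :=
        Real.log_le_log (by positivity) hr1
      have h2 : Real.log (t' x / t x) ≤ Real.log (2 / κ) :=
        Real.log_le_log hrpos hr2
      have habs : |Real.log (t' x / t x)| ≤ M := by
        rw [abs_le]
        constructor
        · calc -M ≤ -|Real.log (κ / 2)| := by
                simp only [neg_le_neg_iff, hM]; exact le_max_left _ _
            _ ≤ Real.log (κ / 2) := neg_abs_le _
            _ ≤ _ := h1
        · exact le_trans h2 (le_trans (le_abs_self _) (le_max_right _ _))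
      have hlgpos : (0:ℝ) < Real.log (t x) := by linarith
      rw [norm_div, Real.norm_eq_abs, Real.norm_eq_abs, abs_of_pos hlgpos]
      exact div_le_div_of_nonneg_right habs hlgpos.le |>.trans_eq rfl
  have hone : Tendsto (fun x => Real.log (t' x) / Real.log (t x)) l (nhds 1) := by
    have : Tendsto (fun x => Real.log (t' x / t x) / Real.log (t x) + 1) l (nhds (0 + 1)) :=
      hzero.add tendsto_const_nhds
    rw [zero_add] at this
    apply this.congr'
    filter_upwards [hratio, hlogt.eventually_ge_atTop 1] with x ⟨hr1, hr2, htp, ht1, ht'p⟩ hlg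
    have hlgpos : (0:ℝ) < Real.log (t x) := by linarith
    rw [Real.log_div (ne_of_gt ht'p) (ne_of_gt htp), sub_div,
      div_self (ne_of_gt hlgpos)]
    ring
  simp only [ht_def, ht'_def] at hone
  have hkey : Real.log lam' / Real.log lam = 1 := tendsto_nhds_unique hlim hone
  have hlamlog : Real.log lam ≠ 0 :=
    ne_of_gt (Real.log_pos hlam)
  have : Real.log lam' = Real.log lam := by
    field_simp at hkey; linarith
  calc lam = Real.exp (Real.log lam) := (Real.exp_log (by linarith)).symm
    _ = Real.exp (Real.log lam') := by rw [this]
    _ = lam' := Real.exp_log (by linarith)
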